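/- arXiv:1505.07766 — 6 statements merged into one kernel-verified Lean document; each statement's English description precedes it below -/
import Mathlib

section
/- If x is a point such that the zero vector lies in the interior of the subdifferential of a convex function f: R^N → R at x, then x is the unique global minimizer of f. -/
/-- If `0` lies in the interior of the subdifferential of a convex function
`f : ℝ^N → ℝ` at `x`, then `x` is the unique global minimizer of `f`. -/
theorem zero_mem_interior_subdifferential_unique_minimizer
    (N : ℕ) (f : EuclideanSpace ℝ (Fin N) → ℝ)
    (hf : ConvexOn ℝ Set.univ f)
    (x : EuclideanSpace ℝ (Fin N))
    (h : (0 : EuclideanSpace ℝ (Fin N)) ∈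
      interior {d : EuclideanSpace ℝ (Fin N) |
        ∀ y, f y - f x ≥ inner ℝ d (y - x)}) :
    ∀ y, y ≠ x → f x < f y := by
  rw [mem_interior_iff_mem_nhds, Metric.mem_nhds_iff] at h
  obtain ⟨ε, hε, hball⟩ := h
  intro y hy
  have hyx : (0:ℝ) < ‖y - x‖ := by
    rw [norm_pos_iff]; exact sub_ne_zero.mpr hy
  set d := (ε / 2 / ‖y - x‖) • (y - x) with hd
  have hdmem : d ∈ Metric.ball (0 : EuclideanSpace ℝ (Fin N)) ε := by
    rw [Metric.mem_ball, dist_zero_right, hd, norm_smul]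
    have : ‖ε / 2 / ‖y - x‖‖ = ε / 2 / ‖y - x‖ := by
      rw [Real.norm_eq_abs, abs_of_pos (by positivity)]
    rw [this, div_mul_cancel₀ _ (ne_of_gt hyx)]
    linarith
  have hsub := hball hdmem y
  have hinner : (inner ℝ d (y - x) : ℝ) = ε / 2 * ‖y - x‖ := by
    rw [hd, inner_smul_left, conj_trivial, real_inner_self_eq_norm_sq]
    field_simp
  rw [hinner] at hsub
  nlinarith
end

section
/- With notation as in the Vandermonde factorization of a quasi-Hankel matrix: if additionally all coefficients c_k are nonzero and the points z_1,...,z_r are A-independent (i.e., the quasi-Vandermonde matrix V_A(z_1,...,z_r) has rank r), then rank([h_{α_i+α_j}]_{i,j=1}^M) = r exactly. -/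
open Matrix

/-- If moreover all `c k` are nonzero and the points `z₁,…,z_r` are `A`-independent
(the quasi-Vandermonde matrix has rank `r`), then the quasi-Hankel matrix
`[h_{αᵢ+αⱼ}]` has rank exactly `r`. -/
theorem quasiHankel_rank_eq_of_A_independent
    (m M r : ℕ) (A : Fin M → (Fin m → ℕ)) (z : Fin r → (Fin m → ℂ))
    (c : Fin r → ℂ) (hc : ∀ k, c k ≠ 0)
    (h : (Fin m → ℕ) → ℂ)
    (hh : ∀ α : Fin m → ℕ, h α = ∑ k, c k * ∏ i, z k i ^ α i)
    (V : Matrix (Fin M) (Fin r) ℂ) (hV : V = Matrix.of fun i k => ∏ l, z k l ^ A i l)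
    (hrank : V.rank = r) :
    (Matrix.of fun i j => h (A i + A j) : Matrix (Fin M) (Fin M) ℂ).rank = r := by
  classical
  set D : Matrix (Fin r) (Fin r) ℂ := Matrix.diagonal c with hD
  have hfact : (Matrix.of fun i j => h (A i + A j) : Matrix (Fin M) (Fin M) ℂ)
      = V * (D * Vᵀ) := by
    ext i j
    simp only [Matrix.mul_apply, Matrix.of_apply, hV, hD, Matrix.diagonal_apply,
      Matrix.transpose_apply, hh, if_true]
    refine Finset.sum_congr rfl fun k _ => ?_
    rw [Finset.sum_eq_single k (fun b _ hb => by simp [Ne.symm hb]) (by simp)]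
    simp only [eq_self_iff_true, if_true, Pi.add_apply, pow_add, Finset.prod_mul_distrib]
    ring
  -- mulVecLin of V is injective
  have hinj : Function.Injective V.mulVecLin := by
    rw [← LinearMap.ker_eq_bot]
    have hrn := LinearMap.finrank_range_add_finrank_ker V.mulVecLin
    rw [Matrix.rank] at hrank
    rw [hrank] at hrn
    simp only [Module.finrank_fintype_fun_eq_card, Fintype.card_fin] at hrn
    have : Module.finrank ℂ (LinearMap.ker V.mulVecLin) = 0 := by omega
    exact Submodule.finrank_eq_zero.mp this
  have hdet : IsUnit D.det := by
    simp only [hD, Matrix.det_diagonal]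
    exact (Finset.prod_ne_zero_iff.mpr fun k _ => hc k).isUnit
  have hB : (D * Vᵀ).rank = r := by
    rw [Matrix.rank_mul_eq_right_of_isUnit_det D Vᵀ hdet, Matrix.rank_transpose, hrank]
  rw [hfact, Matrix.rank, Matrix.mulVecLin_mul, LinearMap.range_comp]
  rw [Matrix.rank] at hB
  exact (LinearEquiv.finrank_eq
    (Submodule.equivMapOfInjective V.mulVecLin hinj _).symm).trans hB
end

section
/- Let B = B^T = U V^T with U, V ∈ C^{n×r} satisfying U^H U = V^H V = I_r, let P = U U^H, and let P_0 be an orthogonal projector of rank r on a subspace of C^n. Then ‖B - P_0 B P_0^T‖_F^2 ≤ 2‖(I - P_0)U‖_F^2 = ‖P - P_0‖_F^2. -/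
open Matrix

/-- Squared Frobenius norm of a complex matrix. -/
noncomputable def frobSq {m n : ℕ} (M : Matrix (Fin m) (Fin n) ℂ) : ℝ :=
  ∑ i, ∑ j, ‖M i j‖ ^ 2

lemma frobSq_eq_trace {m n : ℕ} (M : Matrix (Fin m) (Fin n) ℂ) :
    (frobSq M : ℂ) = Matrix.trace (Mᴴ * M) := by
  simp only [frobSq, Matrix.trace, Matrix.diag, Matrix.mul_apply,
    Matrix.conjTranspose_apply]
  push_cast
  rw [Finset.sum_comm]
  refine Finset.sum_congr rfl fun i _ => Finset.sum_congr rfl fun j _ => ?_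
  rw [Complex.star_def, mul_comm, Complex.mul_conj']

lemma frobSq_nonneg {m n : ℕ} (M : Matrix (Fin m) (Fin n) ℂ) : 0 ≤ frobSq M := by
  apply Finset.sum_nonneg; intros; apply Finset.sum_nonneg; intros; positivity

lemma frobSq_add_of_orth {m n : ℕ} (A C : Matrix (Fin m) (Fin n) ℂ)
    (h1 : Matrix.trace (Aᴴ * C) = 0) (h2 : Matrix.trace (Cᴴ * A) = 0) :
    frobSq (A + C) = frobSq A + frobSq C := by
  have : ((frobSq (A + C) : ℂ)) = (frobSq A : ℂ) + (frobSq C : ℂ) := by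
    rw [frobSq_eq_trace, frobSq_eq_trace, frobSq_eq_trace, Matrix.conjTranspose_add,
      Matrix.add_mul, Matrix.mul_add, Matrix.mul_add, Matrix.trace_add, Matrix.trace_add,
      Matrix.trace_add, h1, h2]
    ring
  exact_mod_cast this

lemma frobSq_transpose {m n : ℕ} (M : Matrix (Fin m) (Fin n) ℂ) :
    frobSq Mᵀ = frobSq M := by
  simp only [frobSq, Matrix.transpose_apply]
  rw [Finset.sum_comm]

/-- For a complex symmetric `B = U Vᵀ` with `Uᴴ U = Vᴴ V = I`, `P = U Uᴴ`, and an
orthogonal (Hermitian idempotent) projector `P₀` of rank `r`: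
`‖B - P₀ B P₀ᵀ‖_F² ≤ 2‖(I - P₀)U‖_F² = ‖P - P₀‖_F²`. -/
theorem frobSq_B_sub_proj_le
    (n r : ℕ) (U V : Matrix (Fin n) (Fin r) ℂ)
    (hU : Uᴴ * U = 1) (hV : Vᴴ * V = 1)
    (B : Matrix (Fin n) (Fin n) ℂ) (hB : B = U * Vᵀ) (hBsymm : Bᵀ = B)
    (P : Matrix (Fin n) (Fin n) ℂ) (hP : P = U * Uᴴ)
    (P₀ : Matrix (Fin n) (Fin n) ℂ) (hP₀herm : P₀ᴴ = P₀)
    (hP₀idem : P₀ * P₀ = P₀) (hP₀rank : P₀.rank = r) :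
    frobSq (B - P₀ * B * P₀ᵀ) ≤ 2 * frobSq ((1 - P₀) * U) ∧
      2 * frobSq ((1 - P₀) * U) = frobSq (P - P₀) := by
  set Q : Matrix (Fin n) (Fin n) ℂ := 1 - P₀ with hQ
  have hQH : Qᴴ = Q := by simp [hQ, hP₀herm]
  have hQP : Q * P₀ = 0 := by simp [hQ, Matrix.sub_mul, hP₀idem]
  have hPQ : P₀ * Q = 0 := by simp [hQ, Matrix.mul_sub, hP₀idem]
  have hQQ : Q * Q = Q := by
    simp [hQ, Matrix.mul_sub, Matrix.sub_mul, hP₀idem]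
  -- trace of P₀ equals r
  have htrP₀ : Matrix.trace P₀ = (r : ℂ) := by
    set f := P₀.mulVecLin with hf
    have hff : ∀ x, f (f x) = f x := by
      intro x
      simp only [hf, Matrix.mulVecLin_apply, Matrix.mulVec_mulVec, hP₀idem]
    have hproj : LinearMap.IsProj (LinearMap.range f) f := by
      constructor
      · intro x; exact LinearMap.mem_range_self f x
      · rintro x ⟨y, rfl⟩; exact hff y
    have htr := hproj.trace
    have hrank : Module.finrank ℂ (LinearMap.range f) = r := hP₀rank
    rw [hrank] at htr
    have : Matrix.trace P₀ = LinearMap.trace ℂ (Fin n → ℂ) f := by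
      rw [LinearMap.trace_eq_matrix_trace ℂ (Pi.basisFun ℂ (Fin n)) f,
        LinearMap.toMatrix_eq_toMatrix']
      congr 1
      rw [hf, ← Matrix.toLin'_apply', LinearMap.toMatrix'_toLin']
    rw [this, htr]
  have htrP : Matrix.trace P = (r : ℂ) := by
    rw [hP, Matrix.trace_mul_comm, hU, Matrix.trace_one]
    simp
  -- frobSq of A * Vᵀ equals frobSq of A
  have hTH : (Vᵀ)ᴴ = (Vᴴ)ᵀ := by
    ext i j
    simp [Matrix.conjTranspose_apply]
  have hVT : Vᵀ * (Vᵀ)ᴴ = 1 := by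
    rw [hTH, ← Matrix.transpose_mul, hV, Matrix.transpose_one]
  have hAV : ∀ A : Matrix (Fin n) (Fin r) ℂ, frobSq (A * Vᵀ) = frobSq A := by
    intro A
    have : ((frobSq (A * Vᵀ) : ℂ)) = (frobSq A : ℂ) := by
      rw [frobSq_eq_trace, frobSq_eq_trace, Matrix.conjTranspose_mul,
        Matrix.trace_mul_comm, Matrix.mul_assoc A Vᵀ, ← Matrix.mul_assoc Vᵀ (Vᵀ)ᴴ Aᴴ,
        hVT, Matrix.one_mul, Matrix.trace_mul_comm]
    exact_mod_cast this
  -- equality part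
  have htraceQU : (frobSq (Q * U) : ℂ) = (r : ℂ) - Matrix.trace (Uᴴ * P₀ * U) := by
    rw [frobSq_eq_trace, Matrix.conjTranspose_mul, hQH, Matrix.mul_assoc,
      ← Matrix.mul_assoc Q Q U, hQQ, hQ]
    rw [Matrix.sub_mul, Matrix.one_mul, Matrix.mul_sub, Matrix.trace_sub, hU,
      Matrix.trace_one, Matrix.mul_assoc]
    simp
  have heq : (2 * frobSq (Q * U) : ℂ) = (frobSq (P - P₀) : ℂ) := by
    have hPH : Pᴴ = P := by rw [hP, Matrix.conjTranspose_mul,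
      Matrix.conjTranspose_conjTranspose]
    have hPP : P * P = P := by
      rw [hP, Matrix.mul_assoc, ← Matrix.mul_assoc Uᴴ U Uᴴ, hU, Matrix.one_mul]
    have htPP₀ : Matrix.trace (P * P₀) = Matrix.trace (Uᴴ * P₀ * U) := by
      rw [hP, Matrix.mul_assoc, Matrix.trace_mul_comm]
    have htP₀P : Matrix.trace (P₀ * P) = Matrix.trace (Uᴴ * P₀ * U) := by
      rw [hP, ← Matrix.mul_assoc, Matrix.trace_mul_cycle]
    rw [htraceQU, frobSq_eq_trace, Matrix.conjTranspose_sub, hPH, hP₀herm, Matrix.sub_mul,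
      Matrix.mul_sub, Matrix.mul_sub, hPP, hP₀idem, Matrix.trace_sub, Matrix.trace_sub,
      Matrix.trace_sub, htPP₀, htP₀P, htrP₀, htrP]
    ring
  have heqR : 2 * frobSq (Q * U) = frobSq (P - P₀) := by exact_mod_cast heq
  refine ⟨?_, heqR⟩
  -- inequality part
  have hsplit : frobSq (B - P₀ * B * P₀ᵀ) = frobSq (Q * B) + frobSq (P₀ * B * Qᵀ) := by
    have hdecomp : B - P₀ * B * P₀ᵀ = Q * B + P₀ * B * Qᵀ := by
      rw [hQ]
      simp only [Matrix.transpose_sub, Matrix.transpose_one, Matrix.sub_mul,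
        Matrix.mul_sub, Matrix.one_mul, Matrix.mul_one]
      abel
    rw [hdecomp]
    apply frobSq_add_of_orth
    · have hz : (Q * B)ᴴ * (P₀ * B * Qᵀ) = 0 := by
        calc (Q * B)ᴴ * (P₀ * B * Qᵀ) = Bᴴ * (Q * P₀) * (B * Qᵀ) := by
              rw [Matrix.conjTranspose_mul, hQH]
              simp only [Matrix.mul_assoc]
          _ = 0 := by rw [hQP]; simp
      rw [hz, Matrix.trace_zero]
    · have hz : (P₀ * B * Qᵀ)ᴴ * (Q * B) = 0 := by
        calc (P₀ * B * Qᵀ)ᴴ * (Q * B) = (Qᵀ)ᴴ * Bᴴ * (P₀ * Q) * B := by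
              rw [Matrix.conjTranspose_mul, Matrix.conjTranspose_mul, hP₀herm]
              simp only [Matrix.mul_assoc]
          _ = 0 := by rw [hPQ]; simp
      rw [hz, Matrix.trace_zero]
  have hQB : frobSq (Q * B) = frobSq (Q * U) := by
    rw [hB, ← Matrix.mul_assoc, hAV]
  have hBQ : frobSq (B * Qᵀ) = frobSq (Q * U) := by
    rw [← frobSq_transpose (B * Qᵀ), Matrix.transpose_mul, Matrix.transpose_transpose,
      hBsymm, hQB]
  have hle2 : frobSq (P₀ * B * Qᵀ) ≤ frobSq (B * Qᵀ) := by
    have hsplit2 : frobSq (B * Qᵀ) = frobSq (P₀ * (B * Qᵀ)) + frobSq (Q * (B * Qᵀ)) := by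
      have hdec : B * Qᵀ = P₀ * (B * Qᵀ) + Q * (B * Qᵀ) := by
        rw [hQ]
        simp only [Matrix.sub_mul, Matrix.one_mul]
        abel
      conv_lhs => rw [hdec]
      apply frobSq_add_of_orth
      · have hz : (P₀ * (B * Qᵀ))ᴴ * (Q * (B * Qᵀ)) = 0 := by
          calc (P₀ * (B * Qᵀ))ᴴ * (Q * (B * Qᵀ)) = (B * Qᵀ)ᴴ * (P₀ * Q) * (B * Qᵀ) := by
                rw [Matrix.conjTranspose_mul, hP₀herm]
                simp only [Matrix.mul_assoc]
            _ = 0 := by rw [hPQ]; simp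
        rw [hz, Matrix.trace_zero]
      · have hz : (Q * (B * Qᵀ))ᴴ * (P₀ * (B * Qᵀ)) = 0 := by
          calc (Q * (B * Qᵀ))ᴴ * (P₀ * (B * Qᵀ)) = (B * Qᵀ)ᴴ * (Q * P₀) * (B * Qᵀ) := by
                rw [Matrix.conjTranspose_mul, hQH]
                simp only [Matrix.mul_assoc]
            _ = 0 := by rw [hQP]; simp
        rw [hz, Matrix.trace_zero]
    rw [hsplit2, ← Matrix.mul_assoc]
    have := frobSq_nonneg (Q * (B * Qᵀ))
    linarith
  rw [hsplit, hQB]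
  rw [hBQ] at hle2
  linarith
end

section
/- Let M_ext = [[M_1, -M_3],[M_2, M_4]] ∈ R^{2n×2n}, and define the complex matrix M_C = (M_1+M_4)/2 + i(M_2+M_3)/2. Then the spectral norm satisfies ‖M_C‖_2 ≤ ‖M_ext‖_2, with equality if M_1 = M_4 and M_2 = M_3. -/
open Matrix

/-- The spectral norm (largest singular value) of a square matrix over `ℝ` or `ℂ`,
as the operator norm of the induced map on Euclidean space. -/
noncomputable def specNorm {𝕜 : Type*} [RCLike 𝕜] {n : Type*} [Fintype n] [DecidableEq n]
    (M : Matrix n n 𝕜) : ℝ :=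
  ‖Matrix.toEuclideanCLM (𝕜 := 𝕜) M‖

namespace SpecNormAux

variable {n : ℕ}

lemma clm_apply {𝕜 : Type*} [RCLike 𝕜] {m : Type*} [Fintype m] [DecidableEq m]
    (M : Matrix m m 𝕜) (x : EuclideanSpace 𝕜 m) (i : m) :
    (Matrix.toEuclideanCLM (𝕜 := 𝕜) M x) i = ∑ j, M i j * x j := by
  have h := Matrix.ofLp_toEuclideanCLM (𝕜 := 𝕜) M x
  have := congrFun h i
  simpa [Matrix.toLin'_apply, Matrix.mulVec, dotProduct] using this

def phif (x : EuclideanSpace ℂ (Fin n)) : EuclideanSpace ℝ (Fin n ⊕ Fin n) :=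
  WithLp.toLp 2 (Sum.elim (fun i => (x i).re) (fun i => (x i).im))

def psif (y : EuclideanSpace ℝ (Fin n ⊕ Fin n)) : EuclideanSpace ℂ (Fin n) :=
  WithLp.toLp 2 (fun i => (⟨y (Sum.inl i), y (Sum.inr i)⟩ : ℂ))

lemma phif_psif (y : EuclideanSpace ℝ (Fin n ⊕ Fin n)) : phif (psif y) = y := by
  rw [WithLp.ext_iff]; funext i; cases i <;> rfl

lemma norm_phif (x : EuclideanSpace ℂ (Fin n)) : ‖phif x‖ = ‖x‖ := by
  rw [EuclideanSpace.norm_eq, EuclideanSpace.norm_eq]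
  congr 1
  rw [Fintype.sum_sum_type, ← Finset.sum_add_distrib]
  congr 1
  funext i
  rw [Complex.sq_norm, Complex.normSq_apply]
  simp [phif]
  ring

lemma intertwine (A B : Matrix (Fin n) (Fin n) ℝ) (x : EuclideanSpace ℂ (Fin n)) :
    phif ((Matrix.toEuclideanCLM (𝕜 := ℂ)
        (A.map (fun a => (a : ℂ)) + Complex.I • B.map (fun a => (a : ℂ)))) x)
      = (Matrix.toEuclideanCLM (𝕜 := ℝ) (Matrix.fromBlocks A (-B) B A)) (phif x) := by
  rw [WithLp.ext_iff]; funext i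
  cases i with
  | inl i =>
      show ((Matrix.toEuclideanCLM (𝕜 := ℂ) _) x i).re = _
      rw [clm_apply, clm_apply, Complex.re_sum, Fintype.sum_sum_type,
        ← Finset.sum_add_distrib]
      refine Finset.sum_congr rfl fun j _ => ?_
      simp [phif, Complex.mul_re, Matrix.fromBlocks, Matrix.map_apply]
      ring
  | inr i =>
      show ((Matrix.toEuclideanCLM (𝕜 := ℂ) _) x i).im = _
      rw [clm_apply, clm_apply, Complex.im_sum, Fintype.sum_sum_type,
        ← Finset.sum_add_distrib]
      refine Finset.sum_congr rfl fun j _ => ?_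
      simp [phif, Complex.mul_im, Matrix.fromBlocks, Matrix.map_apply]
      ring

lemma specNorm_complex_eq_block (A B : Matrix (Fin n) (Fin n) ℝ) :
    specNorm (A.map (fun a => (a : ℂ)) + Complex.I • B.map (fun a => (a : ℂ)))
      = specNorm (Matrix.fromBlocks A (-B) B A) := by
  set MC := A.map (fun a => (a : ℂ)) + Complex.I • B.map (fun a => (a : ℂ)) with hMC
  set N := Matrix.fromBlocks A (-B) B A with hN
  refine le_antisymm ?_ ?_
  · refine ContinuousLinearMap.opNorm_le_bound _ (norm_nonneg _) fun x => ?_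
    calc ‖toEuclideanCLM (𝕜 := ℂ) MC x‖ = ‖phif (toEuclideanCLM (𝕜 := ℂ) MC x)‖ :=
          (norm_phif _).symm
      _ = ‖toEuclideanCLM (𝕜 := ℝ) N (phif x)‖ := by rw [intertwine]
      _ ≤ ‖toEuclideanCLM (𝕜 := ℝ) N‖ * ‖phif x‖ := ContinuousLinearMap.le_opNorm _ _
      _ = ‖toEuclideanCLM (𝕜 := ℝ) N‖ * ‖x‖ := by rw [norm_phif]
  · refine ContinuousLinearMap.opNorm_le_bound _ (norm_nonneg _) fun y => ?_
    have h1 : toEuclideanCLM (𝕜 := ℝ) N y = phif (toEuclideanCLM (𝕜 := ℂ) MC (psif y)) := by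
      rw [intertwine, phif_psif]
    have h2 : ‖psif y‖ = ‖y‖ := by rw [← norm_phif (psif y), phif_psif]
    calc ‖toEuclideanCLM (𝕜 := ℝ) N y‖ = ‖toEuclideanCLM (𝕜 := ℂ) MC (psif y)‖ := by
          rw [h1, norm_phif]
      _ ≤ ‖toEuclideanCLM (𝕜 := ℂ) MC‖ * ‖psif y‖ := ContinuousLinearMap.le_opNorm _ _
      _ = ‖toEuclideanCLM (𝕜 := ℂ) MC‖ * ‖y‖ := by rw [h2]

def Jm : Matrix (Fin n ⊕ Fin n) (Fin n ⊕ Fin n) ℝ := Matrix.fromBlocks 0 (-1) 1 0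
def Jm' : Matrix (Fin n ⊕ Fin n) (Fin n ⊕ Fin n) ℝ := Matrix.fromBlocks 0 1 (-1) 0

lemma Jm_apply (y : EuclideanSpace ℝ (Fin n ⊕ Fin n)) (i : Fin n ⊕ Fin n) :
    (toEuclideanCLM (𝕜 := ℝ) Jm y) i =
      Sum.elim (fun i => -(y (Sum.inr i))) (fun i => y (Sum.inl i)) i := by
  cases i with
  | inl i =>
      rw [clm_apply, Fintype.sum_sum_type]
      simp [Jm, Matrix.fromBlocks, Matrix.one_apply, Finset.sum_ite_eq', ite_mul]
  | inr i =>
      rw [clm_apply, Fintype.sum_sum_type]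
      simp [Jm, Matrix.fromBlocks, Matrix.one_apply, Finset.sum_ite_eq', ite_mul]

lemma Jm'_apply (y : EuclideanSpace ℝ (Fin n ⊕ Fin n)) (i : Fin n ⊕ Fin n) :
    (toEuclideanCLM (𝕜 := ℝ) Jm' y) i =
      Sum.elim (fun i => y (Sum.inr i)) (fun i => -(y (Sum.inl i))) i := by
  cases i with
  | inl i =>
      rw [clm_apply, Fintype.sum_sum_type]
      simp [Jm', Matrix.fromBlocks, Matrix.one_apply, Finset.sum_ite_eq', ite_mul]
  | inr i =>
      rw [clm_apply, Fintype.sum_sum_type]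
      simp [Jm', Matrix.fromBlocks, Matrix.one_apply, Finset.sum_ite_eq', ite_mul]

lemma norm_Jm (y : EuclideanSpace ℝ (Fin n ⊕ Fin n)) :
    ‖toEuclideanCLM (𝕜 := ℝ) Jm y‖ = ‖y‖ := by
  rw [EuclideanSpace.norm_eq, EuclideanSpace.norm_eq]
  congr 1
  rw [Fintype.sum_sum_type, Fintype.sum_sum_type]
  simp only [Jm_apply]
  simp [add_comm]

lemma norm_Jm' (y : EuclideanSpace ℝ (Fin n ⊕ Fin n)) :
    ‖toEuclideanCLM (𝕜 := ℝ) Jm' y‖ = ‖y‖ := by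
  rw [EuclideanSpace.norm_eq, EuclideanSpace.norm_eq]
  congr 1
  rw [Fintype.sum_sum_type, Fintype.sum_sum_type]
  simp only [Jm'_apply]
  simp [add_comm]

lemma opNorm_Jm_le : ‖toEuclideanCLM (𝕜 := ℝ) (Jm (n := n))‖ ≤ 1 :=
  ContinuousLinearMap.opNorm_le_bound _ zero_le_one fun y => by rw [norm_Jm, one_mul]

lemma opNorm_Jm'_le : ‖toEuclideanCLM (𝕜 := ℝ) (Jm' (n := n))‖ ≤ 1 :=
  ContinuousLinearMap.opNorm_le_bound _ zero_le_one fun y => by rw [norm_Jm', one_mul]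

lemma block_decomp (M₁ M₂ M₃ M₄ : Matrix (Fin n) (Fin n) ℝ) :
    Matrix.fromBlocks ((2:ℝ)⁻¹ • (M₁ + M₄)) (-((2:ℝ)⁻¹ • (M₂ + M₃)))
        ((2:ℝ)⁻¹ • (M₂ + M₃)) ((2:ℝ)⁻¹ • (M₁ + M₄))
      = (2:ℝ)⁻¹ • (Matrix.fromBlocks M₁ (-M₃) M₂ M₄
          + Jm * Matrix.fromBlocks M₁ (-M₃) M₂ M₄ * Jm') := by
  rw [Jm, Jm', Matrix.fromBlocks_multiply, Matrix.fromBlocks_multiply]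
  ext i j
  cases i <;> cases j <;>
    simp [Matrix.fromBlocks, Matrix.add_apply, Matrix.smul_apply, Matrix.mul_apply] <;> ring

end SpecNormAux

set_option synthInstance.maxHeartbeats 1000000 in
set_option maxHeartbeats 1000000 in
open SpecNormAux in
/-- For `M_ext = [[M₁, -M₃],[M₂, M₄]] ∈ ℝ^{2n×2n}` and
`M_ℂ = (M₁+M₄)/2 + i(M₂+M₃)/2`, the spectral norms satisfy
`‖M_ℂ‖₂ ≤ ‖M_ext‖₂`, with equality when `M₁ = M₄` and `M₂ = M₃`. -/
theorem specNorm_complexified_le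
    (n : ℕ) (M₁ M₂ M₃ M₄ : Matrix (Fin n) (Fin n) ℝ)
    (Mext : Matrix (Fin n ⊕ Fin n) (Fin n ⊕ Fin n) ℝ)
    (hMext : Mext = Matrix.fromBlocks M₁ (-M₃) M₂ M₄)
    (MC : Matrix (Fin n) (Fin n) ℂ)
    (hMC : MC = (((2:ℝ)⁻¹) • (M₁ + M₄)).map (fun x => (x : ℂ))
        + Complex.I • (((2:ℝ)⁻¹) • (M₂ + M₃)).map (fun x => (x : ℂ))) :
    specNorm MC ≤ specNorm Mext ∧
      (M₁ = M₄ → M₂ = M₃ → specNorm MC = specNorm Mext) := by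
  have hhalf : ∀ X : Matrix (Fin n) (Fin n) ℝ, (2:ℝ)⁻¹ • (X + X) = X := by
    intro X
    rw [← two_smul ℝ X, smul_smul]
    norm_num
  have hblock : specNorm MC = specNorm
      (Matrix.fromBlocks ((2:ℝ)⁻¹ • (M₁ + M₄)) (-((2:ℝ)⁻¹ • (M₂ + M₃)))
        ((2:ℝ)⁻¹ • (M₂ + M₃)) ((2:ℝ)⁻¹ • (M₁ + M₄))) := by
    rw [hMC]
    exact specNorm_complex_eq_block _ _
  constructor
  · rw [hblock, block_decomp, ← hMext]
    unfold specNorm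
    rw [_root_.map_smul, map_add, _root_.map_mul, _root_.map_mul]
    set T := toEuclideanCLM (𝕜 := ℝ) Mext
    set P := toEuclideanCLM (𝕜 := ℝ) (Jm (n := n))
    set Q := toEuclideanCLM (𝕜 := ℝ) (Jm' (n := n))
    have hP : ‖P‖ ≤ 1 := opNorm_Jm_le
    have hQ : ‖Q‖ ≤ 1 := opNorm_Jm'_le
    have h3 : ‖P * T * Q‖ ≤ ‖T‖ := by
      calc ‖P * T * Q‖ ≤ ‖P * T‖ * ‖Q‖ := norm_mul_le _ _
        _ ≤ ‖P‖ * ‖T‖ * ‖Q‖ := by gcongr; exact norm_mul_le _ _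
        _ ≤ 1 * ‖T‖ * 1 := by gcongr
        _ = ‖T‖ := by ring
    calc ‖(2:ℝ)⁻¹ • (T + P * T * Q)‖ = (2:ℝ)⁻¹ * ‖T + P * T * Q‖ := by
          rw [norm_smul ((2:ℝ)⁻¹) (T + P * T * Q)]; norm_num
      _ ≤ (2:ℝ)⁻¹ * (‖T‖ + ‖P * T * Q‖) := by
          gcongr; exact norm_add_le _ _
      _ ≤ (2:ℝ)⁻¹ * (‖T‖ + ‖T‖) := by gcongr
      _ = ‖T‖ := by ring
  · intro h1 h2
    subst h1; subst h2
    rw [hblock, hhalf, hhalf, hMext]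
end

section
/- Let h ∈ C^{d+1} with h_k = c_{1,k} for 0 ≤ k ≤ r-1 and h_k = 0 for r ≤ k ≤ d, where r ≤ (d+2)/2. Then the all-zeros completion (h_k = 0 for k > d) of the (d+1)×(d+1) Hankel matrix [h_{i+j}]_{i,j=0}^d achieves the minimal possible rank among all completions, namely rank at most r. -/
open Matrix

lemma hankel_aux_rank_le (N t : ℕ) (a : ℕ → ℂ) (ha : ∀ k, t ≤ k → a k = 0) :
    (Matrix.of fun i j : Fin N => a ((i : ℕ) + (j : ℕ))).rank ≤ t := by
  set A : Matrix (Fin N) (Fin t) ℂ := Matrix.of fun i k => a ((i : ℕ) + (k : ℕ)) with hA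
  set B : Matrix (Fin t) (Fin N) ℂ :=
    Matrix.of (fun k j => if (k : ℕ) = (j : ℕ) then 1 else 0) with hB
  have key : (Matrix.of fun i j : Fin N => a ((i : ℕ) + (j : ℕ))) = A * B := by
    ext i j
    simp only [Matrix.mul_apply, hA, hB, Matrix.of_apply, mul_ite, mul_one, mul_zero]
    by_cases hj : (j : ℕ) < t
    · rw [Finset.sum_eq_single (⟨(j : ℕ), hj⟩ : Fin t)]
      · simp
      · intro b _ hb
        rw [if_neg]
        intro hc
        exact hb (Fin.ext hc)
      · simp
    · rw [Finset.sum_eq_zero, ha _ (by omega)]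
      intro b _
      rw [if_neg]
      intro hc
      omega
  rw [key]
  exact (rank_mul_le_left A B).trans (by simpa using A.rank_le_card_width)

lemma hankel_aux_rank_submatrix_le {N n : ℕ} (A : Matrix (Fin N) (Fin N) ℂ)
    (f : Fin n → Fin N) : (A.submatrix f f).rank ≤ A.rank := by
  set P : Matrix (Fin n) (Fin N) ℂ := Matrix.of (fun k i => if f k = i then 1 else 0) with hP
  set Q : Matrix (Fin N) (Fin n) ℂ := Matrix.of (fun i k => if f k = i then 1 else 0) with hQ
  have key : A.submatrix f f = P * A * Q := by
    ext k l
    simp [Matrix.mul_apply, hP, hQ, Finset.sum_ite_eq, Finset.sum_ite_eq', ite_mul, mul_ite]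
  rw [key]
  exact (rank_mul_le_left _ _).trans (rank_mul_le_right _ _)

/-- Hankel matrix completion with zero tail: if `h_k = 0` for `r ≤ k ≤ d` (with
`2r ≤ d+2`), then the all-zeros completion of the `(d+1)×(d+1)` Hankel matrix
`[h_{i+j}]` has rank at most `r` and achieves the minimal rank among all completions. -/
theorem hankel_zero_completion_minimal_rank
    (d r : ℕ) (hr : 2 * r ≤ d + 2)
    (h : ℕ → ℂ) (hzero : ∀ k, r ≤ k → k ≤ d → h k = 0)
    (h₀ : ℕ → ℂ) (hh₀ : ∀ k, h₀ k = if k ≤ d then h k else 0) :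
    (Matrix.of fun i j : Fin (d+1) => h₀ ((i : ℕ) + (j : ℕ))).rank ≤ r ∧
      ∀ g : ℕ → ℂ, (∀ k ≤ d, g k = h k) →
        (Matrix.of fun i j : Fin (d+1) => h₀ ((i : ℕ) + (j : ℕ))).rank ≤
          (Matrix.of fun i j : Fin (d+1) => g ((i : ℕ) + (j : ℕ))).rank := by
  have hle : (Matrix.of fun i j : Fin (d+1) => h₀ ((i : ℕ) + (j : ℕ))).rank ≤ r := by
    apply hankel_aux_rank_le
    intro k hk
    rw [hh₀]
    split
    · exact hzero k hk (by assumption)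
    · rfl
  refine ⟨hle, ?_⟩
  intro g hg
  by_cases htriv : ∀ k < r, h k = 0
  · have : (Matrix.of fun i j : Fin (d+1) => h₀ ((i : ℕ) + (j : ℕ))).rank ≤ 0 := by
      apply hankel_aux_rank_le
      intro k _
      rw [hh₀]
      split
      · rcases lt_or_ge k r with hk | hk
        · exact htriv k hk
        · exact hzero k hk (by assumption)
      · rfl
    omega
  · push_neg at htriv
    -- extract the largest s < r with h s ≠ 0
    obtain ⟨s, hs⟩ : ∃ s, s < r ∧ h s ≠ 0 ∧ ∀ k, s < k → k < r → h k = 0 := by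
      classical
      obtain ⟨k0, hk0r, hk0⟩ := htriv
      set T := (Finset.range r).filter (fun k => h k ≠ 0) with hT
      have hne : T.Nonempty := ⟨k0, by
        rw [hT, Finset.mem_filter, Finset.mem_range]; exact ⟨hk0r, hk0⟩⟩
      refine ⟨T.max' hne, ?_, ?_, ?_⟩
      · have := Finset.mem_filter.1 (T.max'_mem hne)
        exact Finset.mem_range.1 this.1
      · exact (Finset.mem_filter.1 (T.max'_mem hne)).2
      · intro k hk hkr
        by_contra hk0'
        have : k ∈ T := by
          rw [hT, Finset.mem_filter, Finset.mem_range]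
          exact ⟨hkr, hk0'⟩
        exact absurd (Finset.le_max' T k this) (by omega)
    obtain ⟨hsr, hsne, hsmax⟩ := hs
    have h2s : 2 * s ≤ d := by omega
    -- h vanishes strictly beyond s (up to d)
    have hvan : ∀ k, s < k → k ≤ d → h k = 0 := by
      intro k hk hkd
      rcases lt_or_ge k r with hkr | hkr
      · exact hsmax k hk hkr
      · exact hzero k hkr hkd
    -- rank H₀ ≤ s + 1
    have hH0 : (Matrix.of fun i j : Fin (d+1) => h₀ ((i : ℕ) + (j : ℕ))).rank ≤ s + 1 := by
      apply hankel_aux_rank_le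
      intro k hk
      rw [hh₀]
      split
      · exact hvan k (by omega) (by assumption)
      · rfl
    -- the (s+1)×(s+1) leading submatrix of the completion has full rank
    set f : Fin (s+1) → Fin (d+1) := fun k => ⟨(k : ℕ), by omega⟩ with hf
    set M : Matrix (Fin (s+1)) (Fin (s+1)) ℂ :=
      (Matrix.of fun i j : Fin (d+1) => g ((i : ℕ) + (j : ℕ))).submatrix f f with hM
    set Nn : Matrix (Fin (s+1)) (Fin (s+1)) ℂ :=
      Matrix.of (fun i j => g ((i : ℕ) + (s - (j : ℕ)))) with hN
    have hNg : ∀ i j : Fin (s+1), (j : ℕ) < (i : ℕ) → Nn i j = 0 := by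
      intro i j hij
      have hi : (i : ℕ) ≤ s := by omega
      have hj : (j : ℕ) ≤ s := by omega
      have h1 : s < (i : ℕ) + (s - (j : ℕ)) := by omega
      have h2 : (i : ℕ) + (s - (j : ℕ)) ≤ d := by omega
      simp only [hN, Matrix.of_apply]
      rw [hg _ h2]
      exact hvan _ h1 h2
    have hBT : Nn.BlockTriangular id := fun i j hij => hNg i j hij
    have hdet : Nn.det = (h s) ^ (s + 1) := by
      rw [Matrix.det_of_upperTriangular hBT]
      have : ∀ i : Fin (s+1), Nn i i = h s := by
        intro i
        have hi : (i : ℕ) ≤ s := by omega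
        have : (i : ℕ) + (s - (i : ℕ)) = s := by omega
        simp only [hN, Matrix.of_apply, this]
        exact hg s (by omega)
      simp [this]
    have hdetne : Nn.det ≠ 0 := by rw [hdet]; exact pow_ne_zero _ hsne
    have hMN : M = Nn.submatrix (Equiv.refl _) Fin.revPerm := by
      ext i j
      have hj : (j : ℕ) ≤ s := by omega
      have hrev : (s - (Fin.rev j : ℕ)) = (j : ℕ) := by
        simp [Fin.rev]
        omega
      simp only [hM, hN, Matrix.submatrix_apply, Matrix.of_apply, Equiv.refl_apply,
        Fin.revPerm_apply, hrev, hf]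
    have hrankN : Nn.rank = s + 1 := by
      rw [Matrix.rank_of_isUnit Nn ((Matrix.isUnit_iff_isUnit_det Nn).2
        (isUnit_iff_ne_zero.2 hdetne))]
      simp
    have hrankM : M.rank = s + 1 := by
      rw [hMN]
      rw [show (Nn.submatrix (Equiv.refl (Fin (s+1))) Fin.revPerm)
          = Nn.submatrix (⇑(Equiv.refl (Fin (s+1)))) (⇑(Fin.revPerm)) from rfl]
      rw [Matrix.rank_submatrix Nn (Equiv.refl _) Fin.revPerm]
      exact hrankN
    have : (s + 1 : ℕ) ≤ (Matrix.of fun i j : Fin (d+1) => g ((i : ℕ) + (j : ℕ))).rank := by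
      rw [← hrankM]
      exact hankel_aux_rank_submatrix_le _ f
    omega
end

section
/- Let d' = ⌊d/2⌋, B = T(m,d') and A = T(m,d), and suppose h_α = Σ_{k=1}^r c_k z_k^α for all α ∈ 2A with c_k ≠ 0 and z_1,...,z_r ∈ C^m B-independent. Then the minimal rank over all completions of the quasi-Hankel matrix H_A(h) (with entries indexed by A fixed, entries indexed by 2A \ A free) equals r, and is attained by the canonical completion h_α = Σ_k c_k z_k^α. -/
open Matrix

/-- Index set for `T(m,d) = {α ∈ ℕ^m : |α| ≤ d}`, encoded with bounded entries. -/
def TIdx (m d : ℕ) := {v : Fin m → Fin (d + 1) // ∑ i, (v i : ℕ) ≤ d}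

instance (m d : ℕ) : Fintype (TIdx m d) := Subtype.fintype _
instance (m d : ℕ) : DecidableEq (TIdx m d) := Subtype.instDecidableEq

/-- Quasi-Hankel matrix `[f_{αᵢ+αⱼ}]` indexed by `T(m,d)`. -/
noncomputable def quasiHankel (m d : ℕ) (f : (Fin m → ℕ) → ℂ) :
    Matrix (TIdx m d) (TIdx m d) ℂ :=
  Matrix.of fun a b => f (fun i => (a.1 i : ℕ) + (b.1 i : ℕ))

/-- Submatrix (same map on rows and columns) has rank at most the original. -/
lemma my_rank_submatrix_le {N L : Type*} [Fintype N] [Fintype L] [DecidableEq N]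
    (M : Matrix N N ℂ) (f : L → N) : (M.submatrix f f).rank ≤ M.rank := by
  have h1 : ((1 : Matrix N N ℂ).submatrix f (Equiv.refl N)) * M = M.submatrix f id := by
    simpa using Matrix.one_submatrix_mul f (Equiv.refl N) M
  have h2 : (M.submatrix f id) * ((1 : Matrix N N ℂ).submatrix (Equiv.refl N) f)
      = M.submatrix f f := by
    simpa using Matrix.mul_submatrix_one (Equiv.refl N) f (M.submatrix f id)
  calc (M.submatrix f f).rank
      = ((M.submatrix f id) * ((1 : Matrix N N ℂ).submatrix (Equiv.refl N) f)).rank := by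
        rw [h2]
    _ ≤ (M.submatrix f id).rank := Matrix.rank_mul_le_left _ _
    _ = (((1 : Matrix N N ℂ).submatrix f (Equiv.refl N)) * M).rank := by rw [h1]
    _ ≤ M.rank := Matrix.rank_mul_le_right _ _

/-- Left multiplication by a full-column-rank matrix preserves rank. -/
lemma my_rank_mul_full_col {N O : Type*} [Fintype N] [Fintype O] {r : ℕ}
    (A : Matrix N (Fin r) ℂ) (hA : A.rank = r) (B : Matrix (Fin r) O ℂ) :
    (A * B).rank = B.rank := by
  have hinj : Function.Injective A.mulVecLin := by
    rw [← LinearMap.ker_eq_bot]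
    have hrn := A.mulVecLin.finrank_range_add_finrank_ker
    rw [show Module.finrank ℂ (LinearMap.range A.mulVecLin) = r from hA] at hrn
    simp only [Module.finrank_pi, Fintype.card_fin] at hrn
    have : Module.finrank ℂ (LinearMap.ker A.mulVecLin) = 0 := by omega
    exact Submodule.finrank_eq_zero.mp this
  rw [Matrix.rank, Matrix.rank, Matrix.mulVecLin_mul, LinearMap.range_comp]
  exact (LinearEquiv.finrank_eq
    (Submodule.equivMapOfInjective _ hinj (LinearMap.range B.mulVecLin))).symm

/-- Vandermonde factorization of the quasi-Hankel matrix. -/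
lemma my_factor (m d' r : ℕ) (z : Fin r → Fin m → ℂ) (c : Fin r → ℂ)
    (H : (Fin m → ℕ) → ℂ)
    (hH : ∀ a : Fin m → ℕ, H a = ∑ k, c k * ∏ i, z k i ^ a i) :
    quasiHankel m d' H =
      (Matrix.of fun (a : TIdx m d') k => ∏ i, z k i ^ (a.1 i : ℕ)) *
        (Matrix.diagonal c *
          (Matrix.of fun (a : TIdx m d') k => ∏ i, z k i ^ (a.1 i : ℕ))ᵀ) := by
  ext a b
  simp only [quasiHankel, Matrix.of_apply, Matrix.mul_apply, Matrix.diagonal_mul,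
    Matrix.transpose_apply, hH]
  refine Finset.sum_congr rfl fun k _ => ?_
  simp only [Matrix.diagonal_apply, ite_mul, zero_mul, Finset.sum_ite_eq,
    Finset.mem_univ, if_true, pow_add, Finset.prod_mul_distrib]
  ring

/-- Quasi-Hankel low-rank completion: with `B = T(m,⌊d/2⌋)`, `A = T(m,d)`,
`h_α = ∑ₖ cₖ zₖ^α` with all `cₖ ≠ 0` and `z₁,…,z_r` `B`-independent, the minimal rank
over all completions of `H_A(h)` (entries indexed by `A` fixed, the rest free)
equals `r`, attained by the canonical completion `h_α = ∑ₖ cₖ zₖ^α`. -/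
theorem quasiHankel_minimal_rank_completion
    (m d r : ℕ) (z : Fin r → Fin m → ℂ) (c : Fin r → ℂ) (hc : ∀ k, c k ≠ 0)
    (H : (Fin m → ℕ) → ℂ)
    (hH : ∀ a : Fin m → ℕ, H a = ∑ k, c k * ∏ i, z k i ^ a i)
    (VB : Matrix (TIdx m (d / 2)) (Fin r) ℂ)
    (hVB : VB = Matrix.of fun a k => ∏ i, z k i ^ (a.1 i : ℕ))
    (hBindep : VB.rank = r) :
    (quasiHankel m d H).rank = r ∧
      ∀ g : (Fin m → ℕ) → ℂ, (∀ a : Fin m → ℕ, ∑ i, a i ≤ d → g a = H a) →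
        r ≤ (quasiHankel m d g).rank := by
  have hd2 : d / 2 + 1 ≤ d + 1 := Nat.succ_le_succ (Nat.div_le_self d 2)
  -- the embedding of B = T(m, d/2) into A = T(m, d)
  have he2 : ∀ a : TIdx m (d / 2), ∑ i, ((Fin.castLE hd2 (a.1 i) : Fin (d + 1)) : ℕ) ≤ d := by
    intro a
    simp only [Fin.coe_castLE]
    exact a.2.trans (Nat.div_le_self d 2)
  let e : TIdx m (d / 2) → TIdx m d := fun a => ⟨fun i => Fin.castLE hd2 (a.1 i), he2 a⟩
  -- rank of the B-indexed quasi-Hankel matrix is r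
  have hdet : IsUnit (Matrix.diagonal c).det := by
    rw [Matrix.det_diagonal]
    exact isUnit_iff_ne_zero.mpr (Finset.prod_ne_zero_iff.mpr fun k _ => hc k)
  have hrankB : (quasiHankel m (d / 2) H).rank = r := by
    rw [my_factor m (d / 2) r z c H hH, ← hVB, my_rank_mul_full_col VB hBindep,
      Matrix.rank_mul_eq_right_of_isUnit_det _ _ hdet, Matrix.rank_transpose, hBindep]
  -- lower bound for every completion
  have hlow : ∀ g : (Fin m → ℕ) → ℂ, (∀ a : Fin m → ℕ, ∑ i, a i ≤ d → g a = H a) →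
      r ≤ (quasiHankel m d g).rank := by
    intro g hg
    have hsub : (quasiHankel m d g).submatrix e e = quasiHankel m (d / 2) H := by
      ext a b
      refine hg _ ?_
      simp only [e, Fin.coe_castLE, Finset.sum_add_distrib]
      have := Nat.add_le_add a.2 b.2
      omega
    calc r = (quasiHankel m (d / 2) H).rank := hrankB.symm
      _ = ((quasiHankel m d g).submatrix e e).rank := by rw [hsub]
      _ ≤ (quasiHankel m d g).rank := my_rank_submatrix_le _ e
  refine ⟨le_antisymm ?_ (hlow H fun a _ => rfl), hlow⟩
  rw [my_factor m d r z c H hH]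
  exact (Matrix.rank_mul_le_right _ _).trans
    ((Matrix.rank_le_card_height _).trans_eq (Fintype.card_fin r))
end
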